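/- arXiv:2510.00717 — 7 statements merged into one kernel-verified Lean document; each statement's English description precedes it below -/
import Mathlib

section
/- If A_K ∈ ℝ^{n×n} is Schur and B ∈ ℝ^{n×m} is nonzero, then any ρ > 0 such that A_K + BΔ is Schur for all Δ ∈ B(0,ρ) satisfies ρ < (n − tr(A_K))·‖B‖ / tr(BBᵀ). In particular the supremum of such ρ is finite. -/
open Matrix

/-- Spectral norm (operator 2-norm) of a real matrix. -/
noncomputable def sNorm {m n : ℕ} (M : Matrix (Fin m) (Fin n) ℝ) : ℝ :=
  ‖(Matrix.toEuclideanLin M).toContinuousLinearMap‖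

/-- A real square matrix is Schur if all its complex eigenvalues have modulus < 1. -/
def IsSchur {n : ℕ} (A : Matrix (Fin n) (Fin n) ℝ) : Prop :=
  ∀ μ ∈ spectrum ℂ (A.map Complex.ofReal), ‖μ‖ < 1

lemma sNorm_transpose {m n : ℕ} (M : Matrix (Fin m) (Fin n) ℝ) : sNorm Mᵀ = sNorm M := by
  have h : Mᵀ = Mᴴ := by
    ext i j; simp [conjTranspose_apply]
  rw [sNorm, h, Matrix.toEuclideanLin_conjTranspose_eq_adjoint,
    LinearMap.adjoint_toContinuousLinearMap]
  exact LinearIsometryEquiv.norm_map ContinuousLinearMap.adjoint _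

lemma sNorm_smul {m n : ℕ} (c : ℝ) (M : Matrix (Fin m) (Fin n) ℝ) :
    sNorm (c • M) = |c| * sNorm M := by
  simp only [sNorm, _root_.map_smul]
  have := norm_smul c (LinearMap.toContinuousLinearMap (toEuclideanLin M))
  rw [this, Real.norm_eq_abs]

lemma sNorm_pos {m n : ℕ} {M : Matrix (Fin m) (Fin n) ℝ} (h : M ≠ 0) : 0 < sNorm M := by
  rw [sNorm, norm_pos_iff]
  intro hc
  apply h
  have h2 : Matrix.toEuclideanLin M = 0 :=
    LinearMap.ext fun x => by simpa using ContinuousLinearMap.ext_iff.mp hc x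
  simpa using (map_eq_zero_iff _ (Matrix.toEuclideanLin (𝕜 := ℝ)).injective).mp h2

lemma root_mem_spectrum {n : ℕ} (M : Matrix (Fin n) (Fin n) ℂ) (μ : ℂ)
    (h : μ ∈ M.charpoly.roots) : μ ∈ spectrum ℂ M := by
  have hroot : M.charpoly.IsRoot μ := (Polynomial.mem_roots (M.charpoly_monic.ne_zero)).mp h
  have hdet : (Matrix.scalar (Fin n) μ - M).det = 0 := by
    have : Polynomial.eval μ M.charpoly
        = ((charmatrix M).map (Polynomial.evalRingHom μ)).det := by
      rw [Matrix.charpoly, ← Polynomial.coe_evalRingHom, RingHom.map_det]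
      rfl
    have hmap : (charmatrix M).map (Polynomial.evalRingHom μ) = Matrix.scalar (Fin n) μ - M := by
      ext i j
      by_cases hij : i = j <;>
        simp [charmatrix_apply, hij, Matrix.one_apply, Matrix.scalar, diagonal_apply]
    rw [hmap] at this
    rw [← this]
    exact hroot
  rw [spectrum.mem_iff]
  intro hu
  rw [Matrix.isUnit_iff_isUnit_det] at hu
  have : algebraMap ℂ (Matrix (Fin n) (Fin n) ℂ) μ = Matrix.scalar (Fin n) μ := rfl
  rw [this, hdet] at hu
  exact (not_isUnit_zero hu)

lemma trace_lt_of_isSchur {n : ℕ} (hn : 0 < n) (M : Matrix (Fin n) (Fin n) ℝ)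
    (h : IsSchur M) : M.trace < n := by
  set Mc := M.map (Complex.ofReal) with hMc
  have htr : Mc.trace = (M.trace : ℂ) := by
    simp [Matrix.trace, hMc, Matrix.map_apply, Matrix.diag]
  have hsum : Mc.trace = Mc.charpoly.roots.sum := Matrix.trace_eq_sum_roots_charpoly Mc
  have hcard : (Multiset.card Mc.charpoly.roots) = n := by
    rw [(Polynomial.splits_iff_card_roots).mp (IsAlgClosed.splits Mc.charpoly),
      Matrix.charpoly_natDegree_eq_dim, Fintype.card_fin]
  have hre : M.trace = (Mc.charpoly.roots.map Complex.re).sum := by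
    have := congrArg Complex.re (htr.symm.trans hsum)
    rw [Complex.ofReal_re] at this
    rw [this]
    exact (map_multiset_sum Complex.reAddGroupHom Mc.charpoly.roots)
  have hne : Mc.charpoly.roots ≠ 0 := by
    intro h0
    rw [h0] at hcard
    simp at hcard
    omega
  have hlt : (Mc.charpoly.roots.map Complex.re).sum
      < (Mc.charpoly.roots.map (fun _ => (1:ℝ))).sum := by
    apply Multiset.sum_lt_sum_of_nonempty hne
    intro μ hμ
    exact lt_of_le_of_lt (Complex.re_le_norm μ) (h μ (root_mem_spectrum Mc μ hμ))
  have hone : (Mc.charpoly.roots.map (fun _ => (1:ℝ))).sum = n := by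
    rw [Multiset.map_const', Multiset.sum_replicate, hcard]
    simp
  rw [hre]
  rw [hone] at hlt
  exact hlt

theorem stmt1 {n m : ℕ} (AK : Matrix (Fin n) (Fin n) ℝ) (B : Matrix (Fin n) (Fin m) ℝ)
    (hA : IsSchur AK) (hB : B ≠ 0) :
    (∀ ρ : ℝ, 0 < ρ →
      (∀ Δ : Matrix (Fin m) (Fin n) ℝ, sNorm Δ ≤ ρ → IsSchur (AK + B * Δ)) →
      ρ < ((n : ℝ) - AK.trace) * sNorm B / (B * Bᵀ).trace) ∧
    BddAbove {ρ : ℝ | 0 < ρ ∧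
      ∀ Δ : Matrix (Fin m) (Fin n) ℝ, sNorm Δ ≤ ρ → IsSchur (AK + B * Δ)} := by
  -- basic positivity facts
  have hn : 0 < n := by
    rcases Nat.eq_zero_or_pos n with h0 | h
    · exact absurd (by subst h0; ext i j; exact i.elim0) hB
    · exact h
  obtain ⟨i0, j0, h0⟩ : ∃ i j, B i j ≠ 0 := by
    rw [Ne, ← Matrix.ext_iff] at hB
    push_neg at hB
    exact hB
  have hT : 0 < (B * Bᵀ).trace := by
    have htr : (B * Bᵀ).trace = ∑ i, ∑ j, (B i j) ^ 2 := by
      simp [Matrix.trace, Matrix.mul_apply, Matrix.diag, transpose_apply, sq]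
    rw [htr]
    apply Finset.sum_pos' (fun i _ => Finset.sum_nonneg fun j _ => sq_nonneg _)
    exact ⟨i0, Finset.mem_univ _,
      Finset.sum_pos' (fun j _ => sq_nonneg _) ⟨j0, Finset.mem_univ _, by positivity⟩⟩
  have hs : 0 < sNorm B := sNorm_pos hB
  have key : ∀ ρ : ℝ, 0 < ρ →
      (∀ Δ : Matrix (Fin m) (Fin n) ℝ, sNorm Δ ≤ ρ → IsSchur (AK + B * Δ)) →
      ρ < ((n : ℝ) - AK.trace) * sNorm B / (B * Bᵀ).trace := by
    intro ρ hρ hS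
    set c : ℝ := ρ / sNorm B with hc
    have hcpos : 0 < c := div_pos hρ hs
    have hΔnorm : sNorm (c • Bᵀ) = ρ := by
      rw [sNorm_smul, sNorm_transpose, abs_of_pos hcpos, hc,
        div_mul_cancel₀ _ (ne_of_gt hs)]
    have hSchur := hS (c • Bᵀ) (le_of_eq hΔnorm)
    have hmul : B * (c • Bᵀ) = c • (B * Bᵀ) := by
      rw [Matrix.mul_smul]
    rw [hmul] at hSchur
    have hlt := trace_lt_of_isSchur hn _ hSchur
    rw [Matrix.trace_add, Matrix.trace_smul, smul_eq_mul] at hlt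
    rw [lt_div_iff₀ hT]
    have h3 : c * sNorm B = ρ := div_mul_cancel₀ _ (ne_of_gt hs)
    nlinarith [mul_lt_mul_of_pos_right hlt hs]
  refine ⟨key, ⟨((n : ℝ) - AK.trace) * sNorm B / (B * Bᵀ).trace, ?_⟩⟩
  rintro ρ ⟨hρ, hS⟩
  exact (key ρ hρ hS).le
end

section
/- Let Π be a symmetric (q+r)×(q+r) real matrix with blocks Π₁₁ ∈ Sym(q), Π₁₂ = Π₂₁ᵀ, Π₂₂ ∈ Sym(r), such that Π₂₂ ≤ 0 and ker Π₂₂ ⊆ ker Π₁₂. Then the set Z_r(Π) = { Z ∈ ℝ^{r×q} : [I; Z]ᵀ Π [I; Z] ≥ 0 } is nonempty if and only if the generalized Schur complement Π|Π₂₂ = Π₁₁ − Π₁₂ Π₂₂† Π₂₁ is positive semidefinite. -/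
open Matrix

theorem stmt8 {q r : ℕ} (Pm : Matrix (Fin q ⊕ Fin r) (Fin q ⊕ Fin r) ℝ)
    (hsym : Pm.IsSymm)
    (h22 : (-(Pm.toBlocks₂₂)).PosSemidef)
    (hker : ∀ x : Fin r → ℝ, (Pm.toBlocks₂₂).mulVec x = 0 → (Pm.toBlocks₁₂).mulVec x = 0)
    -- Pd is the Moore–Penrose pseudoinverse of Π₂₂ (the four Penrose conditions):
    (Pd : Matrix (Fin r) (Fin r) ℝ)
    (hPd1 : Pm.toBlocks₂₂ * Pd * Pm.toBlocks₂₂ = Pm.toBlocks₂₂)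
    (hPd2 : Pd * Pm.toBlocks₂₂ * Pd = Pd)
    (hPd3 : (Pm.toBlocks₂₂ * Pd)ᵀ = Pm.toBlocks₂₂ * Pd)
    (hPd4 : (Pd * Pm.toBlocks₂₂)ᵀ = Pd * Pm.toBlocks₂₂) :
    (∃ Z : Matrix (Fin r) (Fin q) ℝ,
        ((Matrix.fromRows (1 : Matrix (Fin q) (Fin q) ℝ) Z)ᵀ * Pm *
          Matrix.fromRows (1 : Matrix (Fin q) (Fin q) ℝ) Z).PosSemidef) ↔
    (Pm.toBlocks₁₁ - Pm.toBlocks₁₂ * Pd * Pm.toBlocks₂₁).PosSemidef := by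
  set A := Pm.toBlocks₁₁ with hA
  set B := Pm.toBlocks₁₂ with hB
  set C := Pm.toBlocks₂₂ with hC
  have hCs : Cᵀ = C := by
    ext i j
    exact hsym.apply (Sum.inr i) (Sum.inr j)
  have hB21 : Pm.toBlocks₂₁ = Bᵀ := by
    ext i j
    exact hsym.apply (Sum.inl j) (Sum.inr i)
  -- Pd is symmetric
  have h1 : C * Pdᵀ = Pd * C := by
    calc C * Pdᵀ = Cᵀ * Pdᵀ := by rw [hCs]
    _ = (Pd * C)ᵀ := (transpose_mul _ _).symm
    _ = Pd * C := hPd4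
  have h2 : Pdᵀ * C = C * Pd := by
    calc Pdᵀ * C = Pdᵀ * Cᵀ := by rw [hCs]
    _ = (C * Pd)ᵀ := (transpose_mul _ _).symm
    _ = C * Pd := hPd3
  have h3 : C * Pdᵀ = Pdᵀ * C := by
    calc C * Pdᵀ = (C * Pd * C) * Pdᵀ := by rw [hPd1]
    _ = (C * Pd) * (C * Pdᵀ) := by rw [Matrix.mul_assoc]
    _ = (Pdᵀ * C) * (Pd * C) := by rw [h1, h2]
    _ = Pdᵀ * (C * Pd * C) := by rw [Matrix.mul_assoc, Matrix.mul_assoc]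
    _ = Pdᵀ * C := by rw [hPd1]
  have hCPdt : C * Pdᵀ = C * Pd := by rw [h3, h2]
  have hPds : Pdᵀ = Pd := by
    have h4 : Pdᵀ * (C * Pdᵀ) = Pdᵀ := by
      have h5 := congrArg Matrix.transpose hPd2
      rw [transpose_mul, transpose_mul, hCs] at h5
      exact h5
    calc Pdᵀ = Pdᵀ * (C * Pdᵀ) := h4.symm
    _ = Pdᵀ * (C * Pd) := by rw [hCPdt]
    _ = (Pdᵀ * C) * Pd := by rw [Matrix.mul_assoc]
    _ = (C * Pd) * Pd := by rw [h2]
    _ = (Pd * C) * Pd := by rw [← h1, hCPdt]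
    _ = Pd := hPd2
  -- kernel condition in matrix form
  have hBPdC : B * Pd * C = B := by
    have key : B * (Pd * C - 1) = 0 := by
      have hCN : C * (Pd * C - 1) = 0 := by
        rw [Matrix.mul_sub, Matrix.mul_one, ← Matrix.mul_assoc, hPd1, sub_self]
      ext i j
      have hc : C *ᵥ (fun k => (Pd * C - 1) k j) = 0 := by
        ext l
        have hl := congrFun (congrFun hCN l) j
        simpa [Matrix.mulVec, dotProduct, Matrix.mul_apply] using hl
      have hb := congrFun (hker _ hc) i
      simpa [Matrix.mulVec, dotProduct, Matrix.mul_apply] using hb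
    rw [Matrix.mul_sub, Matrix.mul_one, sub_eq_zero, ← Matrix.mul_assoc] at key
    exact key
  have hCPdBt : C * (Pd * Bᵀ) = Bᵀ := by
    have : (B * Pd * C)ᵀ = Bᵀ := by rw [hBPdC]
    rw [transpose_mul, transpose_mul, hCs, hPds, ← Matrix.mul_assoc] at this
    rw [← Matrix.mul_assoc]
    exact this
  -- the quadratic form
  have hform : ∀ Z : Matrix (Fin r) (Fin q) ℝ,
      (Matrix.fromRows (1 : Matrix (Fin q) (Fin q) ℝ) Z)ᵀ * Pm *
        Matrix.fromRows (1 : Matrix (Fin q) (Fin q) ℝ) Z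
      = A + B * Z + Zᵀ * Bᵀ + Zᵀ * C * Z := by
    intro Z
    conv_lhs => rw [← Matrix.fromBlocks_toBlocks Pm]
    rw [← hA, ← hB, ← hC, hB21]
    rw [transpose_fromRows, transpose_one, Matrix.mul_assoc, fromBlocks_mul_fromRows,
      fromCols_mul_fromRows]
    simp only [Matrix.mul_one, Matrix.one_mul, Matrix.mul_add, ← Matrix.mul_assoc]
    abel
  -- key algebraic identity
  have e1 : ∀ Z : Matrix (Fin r) (Fin q) ℝ,
      (Z + Pd * Bᵀ)ᵀ * C * (Z + Pd * Bᵀ)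
        = Zᵀ * C * Z + Zᵀ * Bᵀ + B * Z + B * Pd * Bᵀ := by
    intro Z
    have ht : (Z + Pd * Bᵀ)ᵀ = Zᵀ + B * Pd := by
      rw [transpose_add, transpose_mul, transpose_transpose, hPds]
    rw [ht, Matrix.add_mul, hBPdC, Matrix.add_mul, Matrix.mul_add, Matrix.mul_add,
      Matrix.mul_assoc Zᵀ C (Pd * Bᵀ), hCPdBt, ← Matrix.mul_assoc B Pd Bᵀ]
    abel
  rw [hB21]
  constructor
  · rintro ⟨Z, hZ⟩
    rw [hform Z] at hZ
    have hW := h22.conjTranspose_mul_mul_same (Z + Pd * Bᵀ)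
    rw [conjTranspose_eq_transpose_of_trivial] at hW
    have hkey : A - B * Pd * Bᵀ
        = (A + B * Z + Zᵀ * Bᵀ + Zᵀ * C * Z) + (Z + Pd * Bᵀ)ᵀ * (-C) * (Z + Pd * Bᵀ) := by
      rw [Matrix.mul_neg, Matrix.neg_mul, e1 Z]
      abel
    rw [hkey]
    exact hZ.add hW
  · intro hS
    refine ⟨-(Pd * Bᵀ), ?_⟩
    rw [hform]
    have : A + B * -(Pd * Bᵀ) + (-(Pd * Bᵀ))ᵀ * Bᵀ + (-(Pd * Bᵀ))ᵀ * C * -(Pd * Bᵀ)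
        = A - B * Pd * Bᵀ := by
      have ht : (-(Pd * Bᵀ))ᵀ = -(B * Pd) := by
        rw [transpose_neg, transpose_mul, transpose_transpose, hPds]
      rw [ht]
      simp only [Matrix.neg_mul, Matrix.mul_neg, neg_neg, ← Matrix.mul_assoc, hBPdC]
      abel
    rw [this]
    exact hS
end

section
/- Let Π be a symmetric (q+r)×(q+r) real matrix with Π₂₂ ≤ 0 and ker Π₂₂ ⊆ ker Π₁₂. Then the set Z⁺_r(Π) = { Z ∈ ℝ^{r×q} : [I; Z]ᵀ Π [I; Z] > 0 } is nonempty if and only if Π|Π₂₂ = Π₁₁ − Π₁₂ Π₂₂† Π₂₁ > 0. -/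
open Matrix

private lemma pinv_uniq {n : Type*} [Fintype n] (M A B : Matrix n n ℝ)
    (hA1 : M*A*M = M) (hA2 : A*M*A = A) (hA3 : (M*A)ᵀ = M*A) (hA4 : (A*M)ᵀ = A*M)
    (hB1 : M*B*M = M) (hB2 : B*M*B = B) (hB3 : (M*B)ᵀ = M*B) (hB4 : (B*M)ᵀ = B*M) :
    B = A := by
  have hMB : M * B = M * A := by
    calc M * B = (M*B)ᵀ := hB3.symm
    _ = Bᵀ * Mᵀ := transpose_mul M B
    _ = Bᵀ * (M*A*M)ᵀ := by rw [hA1]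
    _ = Bᵀ * (Mᵀ * (M*A)) := by rw [transpose_mul (M*A) M, hA3]
    _ = (Bᵀ * Mᵀ) * (M*A) := by rw [Matrix.mul_assoc]
    _ = (M*B)ᵀ * (M*A) := by rw [transpose_mul]
    _ = (M*B) * (M*A) := by rw [hB3]
    _ = M * A := by simp only [← Matrix.mul_assoc]; rw [hB1]
  have hBM : B * M = A * M := by
    calc B * M = (B*M)ᵀ := hB4.symm
    _ = Mᵀ * Bᵀ := transpose_mul B M
    _ = (M*(A*M))ᵀ * Bᵀ := by rw [← Matrix.mul_assoc, hA1]
    _ = ((A*M)ᵀ * Mᵀ) * Bᵀ := by rw [transpose_mul]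
    _ = ((A*M) * Mᵀ) * Bᵀ := by rw [hA4]
    _ = (A*M) * (Mᵀ * Bᵀ) := by rw [Matrix.mul_assoc]
    _ = (A*M) * (B*M)ᵀ := by rw [transpose_mul]
    _ = (A*M) * (B*M) := by rw [hB4]
    _ = A * (M*B*M) := by simp only [Matrix.mul_assoc]
    _ = A * M := by rw [hB1]
  calc B = B*M*B := hB2.symm
  _ = (A*M)*B := by rw [hBM]
  _ = A*(M*B) := by rw [Matrix.mul_assoc]
  _ = A*(M*A) := by rw [hMB]
  _ = A*M*A := by rw [Matrix.mul_assoc]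
  _ = A := hA2

private lemma pinv_symm {n : Type*} [Fintype n] (M P : Matrix n n ℝ) (hM : Mᵀ = M)
    (h1 : M*P*M = M) (h2 : P*M*P = P) (h3 : (M*P)ᵀ = M*P) (h4 : (P*M)ᵀ = P*M) :
    Pᵀ = P := by
  have hMPT : M * Pᵀ = P * M := by
    calc M * Pᵀ = Mᵀ * Pᵀ := by rw [hM]
    _ = (P * M)ᵀ := (transpose_mul P M).symm
    _ = P * M := h4
  have hPTM : Pᵀ * M = M * P := by
    calc Pᵀ * M = Pᵀ * Mᵀ := by rw [hM]
    _ = (M * P)ᵀ := (transpose_mul M P).symm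
    _ = M * P := h3
  refine pinv_uniq M P Pᵀ h1 h2 h3 h4 ?_ ?_ ?_ ?_
  · calc M * Pᵀ * M = (P * M) * M := by rw [hMPT]
    _ = (P*M)ᵀ * Mᵀ := by rw [h4, hM]
    _ = (M*(P*M))ᵀ := (transpose_mul M (P*M)).symm
    _ = (M*P*M)ᵀ := by rw [Matrix.mul_assoc]
    _ = Mᵀ := by rw [h1]
    _ = M := hM
  · calc Pᵀ * M * Pᵀ = (M * P) * Pᵀ := by rw [hPTM]
    _ = (M*P)ᵀ * Pᵀ := by rw [h3]
    _ = (P*(M*P))ᵀ := (transpose_mul P (M*P)).symm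
    _ = (P*M*P)ᵀ := by rw [Matrix.mul_assoc]
    _ = Pᵀ := by rw [h2]
  · rw [hMPT, h4]
  · rw [hPTM, h3]

theorem stmt9 {q r : ℕ} (Pm : Matrix (Fin q ⊕ Fin r) (Fin q ⊕ Fin r) ℝ)
    (hsym : Pm.IsSymm)
    (h22 : (-(Pm.toBlocks₂₂)).PosSemidef)
    (hker : ∀ x : Fin r → ℝ, (Pm.toBlocks₂₂).mulVec x = 0 → (Pm.toBlocks₁₂).mulVec x = 0)
    -- Pd is the Moore–Penrose pseudoinverse of Π₂₂ (the four Penrose conditions):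
    (Pd : Matrix (Fin r) (Fin r) ℝ)
    (hPd1 : Pm.toBlocks₂₂ * Pd * Pm.toBlocks₂₂ = Pm.toBlocks₂₂)
    (hPd2 : Pd * Pm.toBlocks₂₂ * Pd = Pd)
    (hPd3 : (Pm.toBlocks₂₂ * Pd)ᵀ = Pm.toBlocks₂₂ * Pd)
    (hPd4 : (Pd * Pm.toBlocks₂₂)ᵀ = Pd * Pm.toBlocks₂₂) :
    (∃ Z : Matrix (Fin r) (Fin q) ℝ,
        ((Matrix.fromRows (1 : Matrix (Fin q) (Fin q) ℝ) Z)ᵀ * Pm *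
          Matrix.fromRows (1 : Matrix (Fin q) (Fin q) ℝ) Z).PosDef) ↔
    (Pm.toBlocks₁₁ - Pm.toBlocks₁₂ * Pd * Pm.toBlocks₂₁).PosDef := by
  set A := Pm.toBlocks₁₁ with hA
  set B := Pm.toBlocks₁₂ with hB
  set C := Pm.toBlocks₂₁ with hC
  set D := Pm.toBlocks₂₂ with hD
  have hPm : fromBlocks A B C D = Pm := Pm.fromBlocks_toBlocks
  -- block symmetry facts
  have hAT : Aᵀ = A := by
    ext i j; exact hsym.apply (Sum.inl i) (Sum.inl j)
  have hDT : Dᵀ = D := by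
    ext i j; exact hsym.apply (Sum.inr i) (Sum.inr j)
  have hBT : Bᵀ = C := by
    ext i j; exact hsym.apply (Sum.inr i) (Sum.inl j)
  have hCT : Cᵀ = B := by
    ext i j; exact hsym.apply (Sum.inl i) (Sum.inr j)
  -- Pd is symmetric
  have hPdT : Pdᵀ = Pd := pinv_symm D Pd hDT hPd1 hPd2 hPd3 hPd4
  -- B * Pd * D = B
  have hBPdD : B * Pd * D = B := by
    have key : ∀ x : Fin r → ℝ, (B * Pd * D).mulVec x = B.mulVec x := by
      intro x
      have h0 : D.mulVec (x - (Pd * D).mulVec x) = 0 := by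
        rw [Matrix.mulVec_sub, Matrix.mulVec_mulVec, ← Matrix.mul_assoc, hPd1, sub_self]
      have h1 := hker _ h0
      rw [Matrix.mulVec_sub, Matrix.mulVec_mulVec, sub_eq_zero] at h1
      rw [Matrix.mul_assoc, h1]
    ext i j
    have := congrFun (key (Pi.single j 1)) i
    rwa [Matrix.mulVec_single_one, Matrix.mulVec_single_one] at this
  have hDPdC : D * (Pd * C) = C := by
    calc D * (Pd * C) = Dᵀ * (Pdᵀ * Bᵀ) := by rw [hDT, hPdT, hBT]
    _ = Dᵀ * (B * Pd)ᵀ := by rw [transpose_mul]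
    _ = ((B*Pd)*D)ᵀ := (transpose_mul (B*Pd) D).symm
    _ = Bᵀ := by rw [hBPdD]
    _ = C := hBT
  have hPdCT : (Pd * C)ᵀ = B * Pd := by
    rw [transpose_mul, hPdT, hCT]
  -- the quadratic form identity
  have quad : ∀ Z : Matrix (Fin r) (Fin q) ℝ,
      (Matrix.fromRows (1 : Matrix (Fin q) (Fin q) ℝ) Z)ᵀ * Pm *
        Matrix.fromRows (1 : Matrix (Fin q) (Fin q) ℝ) Z
        = A + B * Z + Zᵀ * C + Zᵀ * (D * Z) := by
    intro Z
    rw [← hPm, Matrix.mul_assoc, fromBlocks_mul_fromRows, transpose_fromRows,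
      fromCols_mul_fromRows]
    simp [Matrix.mul_add, Matrix.mul_one, Matrix.one_mul, add_assoc]
  -- Schur complement
  set S := A - B * Pd * C with hS
  constructor
  · rintro ⟨Z, hZ⟩
    set W := Z + Pd * C with hW
    have hid : S = ((Matrix.fromRows (1 : Matrix (Fin q) (Fin q) ℝ) Z)ᵀ * Pm *
        Matrix.fromRows (1 : Matrix (Fin q) (Fin q) ℝ) Z) + Wᵀ * (-D) * W := by
      rw [quad Z, hW]
      have hexp : (Z + Pd * C)ᵀ * (-D) * (Z + Pd * C)
          = -(Zᵀ * (D * Z)) - Zᵀ * C - B * Z - B * Pd * C := by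
        rw [transpose_add, hPdCT]
        rw [Matrix.add_mul, Matrix.add_mul, Matrix.mul_add, Matrix.mul_add]
        have e1 : Zᵀ * (-D) * Z = -(Zᵀ * (D * Z)) := by
          rw [Matrix.mul_neg, Matrix.neg_mul, Matrix.mul_assoc]
        have e2 : Zᵀ * (-D) * (Pd * C) = -(Zᵀ * C) := by
          rw [Matrix.mul_neg, Matrix.neg_mul, Matrix.mul_assoc, hDPdC]
        have e3 : B * Pd * (-D) * Z = -(B * Z) := by
          rw [Matrix.mul_neg, Matrix.neg_mul, hBPdD]
        have e4 : B * Pd * (-D) * (Pd * C) = -(B * Pd * C) := by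
          rw [Matrix.mul_neg, Matrix.neg_mul, Matrix.mul_assoc (B*Pd) D, hDPdC]
        rw [e1, e2, e3, e4]
        abel
      rw [hexp, hS]
      abel
    rw [hid]
    refine hZ.add_posSemidef ?_
    have := h22.conjTranspose_mul_mul_same W
    rwa [conjTranspose_eq_transpose_of_trivial] at this
  · intro hSpd
    refine ⟨-(Pd * C), ?_⟩
    rw [quad]
    have : A + B * -(Pd * C) + (-(Pd * C))ᵀ * C + (-(Pd * C))ᵀ * (D * -(Pd * C)) = S := by
      rw [transpose_neg, hPdCT, hS]
      simp only [Matrix.mul_neg, Matrix.neg_mul, neg_neg, Matrix.mul_assoc, hDPdC]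
      abel
    rw [this]
    exact hSpd
end

section
/- Let Π be symmetric (q+r)×(q+r) with Π₂₂ ≤ 0, ker Π₂₂ ⊆ ker Π₁₂, and Π|Π₂₂ ≥ 0. Then every Z of the form Z = −Π₂₂† Π₂₁ + ((−Π₂₂)†)^{1/2} S (Π|Π₂₂)^{1/2} + (I − Π₂₂† Π₂₂) T with Sᵀ S ≤ I belongs to Z_r(Π), i.e., satisfies [I; Z]ᵀ Π [I; Z] ≥ 0. -/
open Matrix

/-- Uniqueness of the Moore–Penrose pseudoinverse (for a symmetric real matrix). -/
lemma mp_unique {n : Type*} [Fintype n] (Dm X Y : Matrix n n ℝ)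
    (hx1 : Dm * X * Dm = Dm) (hx2 : X * Dm * X = X)
    (hx3 : (Dm * X)ᵀ = Dm * X) (hx4 : (X * Dm)ᵀ = X * Dm)
    (hy1 : Dm * Y * Dm = Dm) (hy2 : Y * Dm * Y = Y)
    (hy3 : (Dm * Y)ᵀ = Dm * Y) (hy4 : (Y * Dm)ᵀ = Y * Dm) : X = Y := by
  have hDX : Dm * X = Dm * Y := by
    calc Dm * X = (Dm * Y * Dm) * X := by rw [hy1]
      _ = (Dm * Y) * (Dm * X) := by simp only [Matrix.mul_assoc]
      _ = (Dm * Y)ᵀ * (Dm * X)ᵀ := by rw [hy3, hx3]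
      _ = ((Dm * X) * (Dm * Y))ᵀ := (Matrix.transpose_mul (Dm * X) (Dm * Y)).symm
      _ = ((Dm * X * Dm) * Y)ᵀ := by simp only [Matrix.mul_assoc]
      _ = (Dm * Y)ᵀ := by rw [hx1]
      _ = Dm * Y := hy3
  have hXD : X * Dm = Y * Dm := by
    calc X * Dm = X * (Dm * Y * Dm) := by rw [hy1]
      _ = (X * Dm) * (Y * Dm) := by simp only [Matrix.mul_assoc]
      _ = (X * Dm)ᵀ * (Y * Dm)ᵀ := by rw [hx4, hy4]
      _ = ((Y * Dm) * (X * Dm))ᵀ := (Matrix.transpose_mul (Y * Dm) (X * Dm)).symm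
      _ = (Y * (Dm * X * Dm))ᵀ := by simp only [Matrix.mul_assoc]
      _ = (Y * Dm)ᵀ := by rw [hx1]
      _ = Y * Dm := hy4
  calc X = X * Dm * X := hx2.symm
    _ = X * (Dm * Y) := by rw [Matrix.mul_assoc, hDX]
    _ = (X * Dm) * Y := (Matrix.mul_assoc _ _ _).symm
    _ = (Y * Dm) * Y := by rw [hXD]
    _ = Y := hy2

theorem stmt10 {q r : ℕ} (Pm : Matrix (Fin q ⊕ Fin r) (Fin q ⊕ Fin r) ℝ)
    (hsym : Pm.IsSymm)
    (h22 : (-(Pm.toBlocks₂₂)).PosSemidef)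
    (hker : ∀ x : Fin r → ℝ, (Pm.toBlocks₂₂).mulVec x = 0 → (Pm.toBlocks₁₂).mulVec x = 0)
    -- Pd is the Moore–Penrose pseudoinverse of Π₂₂:
    (Pd : Matrix (Fin r) (Fin r) ℝ)
    (hPd1 : Pm.toBlocks₂₂ * Pd * Pm.toBlocks₂₂ = Pm.toBlocks₂₂)
    (hPd2 : Pd * Pm.toBlocks₂₂ * Pd = Pd)
    (hPd3 : (Pm.toBlocks₂₂ * Pd)ᵀ = Pm.toBlocks₂₂ * Pd)
    (hPd4 : (Pd * Pm.toBlocks₂₂)ᵀ = Pd * Pm.toBlocks₂₂)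
    -- Nd is the Moore–Penrose pseudoinverse of -Π₂₂:
    (Nd : Matrix (Fin r) (Fin r) ℝ)
    (hNd1 : (-(Pm.toBlocks₂₂)) * Nd * (-(Pm.toBlocks₂₂)) = -(Pm.toBlocks₂₂))
    (hNd2 : Nd * (-(Pm.toBlocks₂₂)) * Nd = Nd)
    (hNd3 : ((-(Pm.toBlocks₂₂)) * Nd)ᵀ = (-(Pm.toBlocks₂₂)) * Nd)
    (hNd4 : (Nd * (-(Pm.toBlocks₂₂)))ᵀ = Nd * (-(Pm.toBlocks₂₂)))
    -- the generalized Schur complement is positive semidefinite: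
    (hSchur : (Pm.toBlocks₁₁ - Pm.toBlocks₁₂ * Pd * Pm.toBlocks₂₁).PosSemidef)
    -- R1 is the psd square root of ((-Π₂₂)†), R2 of the Schur complement:
    (R1 : Matrix (Fin r) (Fin r) ℝ) (hR1 : R1.PosSemidef) (hR1sq : R1 * R1 = Nd)
    (R2 : Matrix (Fin q) (Fin q) ℝ) (hR2 : R2.PosSemidef)
    (hR2sq : R2 * R2 = Pm.toBlocks₁₁ - Pm.toBlocks₁₂ * Pd * Pm.toBlocks₂₁)
    (S T : Matrix (Fin r) (Fin q) ℝ)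
    (hS : ((1 : Matrix (Fin q) (Fin q) ℝ) - Sᵀ * S).PosSemidef)
    (Z : Matrix (Fin r) (Fin q) ℝ)
    (hZ : Z = -(Pd * Pm.toBlocks₂₁) + R1 * S * R2 +
      ((1 : Matrix (Fin r) (Fin r) ℝ) - Pd * Pm.toBlocks₂₂) * T) :
    ((Matrix.fromRows (1 : Matrix (Fin q) (Fin q) ℝ) Z)ᵀ * Pm *
      Matrix.fromRows (1 : Matrix (Fin q) (Fin q) ℝ) Z).PosSemidef := by
  set A := Pm.toBlocks₁₁ with hA
  set B := Pm.toBlocks₁₂ with hB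
  set C := Pm.toBlocks₂₁ with hC
  set D := Pm.toBlocks₂₂ with hD
  set W := R1 * S * R2 with hWdef
  have hPmt : Pmᵀ = Pm := hsym
  -- symmetry of the blocks
  have hDs : Dᵀ = D := by
    rw [hD]; ext i j
    exact congrFun (congrFun hPmt (Sum.inr i)) (Sum.inr j)
  have hCB : C = Bᵀ := by
    rw [hB, hC]; ext i j
    exact (congrFun (congrFun hPmt (Sum.inr i)) (Sum.inl j)).symm
  have hR1t : R1ᵀ = R1 := by
    have h : R1ᴴ = R1 := hR1.1
    rwa [Matrix.conjTranspose_eq_transpose_of_trivial] at h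
  have hR2t : R2ᵀ = R2 := by
    have h : R2ᴴ = R2 := hR2.1
    rwa [Matrix.conjTranspose_eq_transpose_of_trivial] at h
  -- Pd is symmetric (uniqueness of Moore-Penrose inverse)
  have t1 : Pdᵀ * D = D * Pd := by rw [← hPd3, Matrix.transpose_mul, hDs]
  have t2 : D * Pdᵀ = Pd * D := by rw [← hPd4, Matrix.transpose_mul, hDs]
  have hy1 : D * Pdᵀ * D = D := by
    have h := congrArg Matrix.transpose hPd1
    simpa [Matrix.transpose_mul, hDs, Matrix.mul_assoc] using h
  have hy2 : Pdᵀ * D * Pdᵀ = Pdᵀ := by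
    have h := congrArg Matrix.transpose hPd2
    simpa [Matrix.transpose_mul, hDs, Matrix.mul_assoc] using h
  have hy3 : (D * Pdᵀ)ᵀ = D * Pdᵀ := by rw [t2]; exact hPd4
  have hy4 : (Pdᵀ * D)ᵀ = Pdᵀ * D := by rw [t1]; exact hPd3
  have hPs : Pdᵀ = Pd :=
    (mp_unique D Pd Pdᵀ hPd1 hPd2 hPd3 hPd4 hy1 hy2 hy3 hy4).symm
  -- kernel facts
  have k0 : D * (1 - Pd * D) = 0 := by
    rw [Matrix.mul_sub, Matrix.mul_one, ← Matrix.mul_assoc, hPd1, sub_self]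
  have kB : B * (1 - Pd * D) = 0 := by
    ext i j
    have hcol : D.mulVec (fun k => (1 - Pd * D) k j) = 0 := by
      ext i'
      have h := congrFun (congrFun k0 i') j
      simpa [Matrix.mul_apply, Matrix.mulVec, dotProduct] using h
    have h := congrFun (hker _ hcol) i
    simpa [Matrix.mul_apply, Matrix.mulVec, dotProduct] using h
  have kBPD : B * (Pd * D) = B := by
    have h := kB
    rw [Matrix.mul_sub, Matrix.mul_one, sub_eq_zero] at h
    exact h.symm
  have hsymPDt : ((1 : Matrix (Fin r) (Fin r) ℝ) - Pd * D)ᵀ = 1 - Pd * D := by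
    rw [Matrix.transpose_sub, Matrix.transpose_one, hPd4]
  have kC : ((1 : Matrix (Fin r) (Fin r) ℝ) - Pd * D) * C = 0 := by
    rw [hCB]
    have h := congrArg Matrix.transpose kB
    rwa [Matrix.transpose_mul, hsymPDt, Matrix.transpose_zero] at h
  have kD : ((1 : Matrix (Fin r) (Fin r) ℝ) - Pd * D) * D = 0 := by
    have h := congrArg Matrix.transpose k0
    rwa [Matrix.transpose_mul, hsymPDt, hDs, Matrix.transpose_zero] at h
  have kDPC : D * (Pd * C) = C := by
    rw [hCB]
    have h : (D * (Pd * Bᵀ))ᵀ = Bᵀᵀ := by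
      rw [Matrix.transpose_mul, Matrix.transpose_mul, Matrix.transpose_transpose,
        hDs, hPs, Matrix.mul_assoc, kBPD]
    calc D * (Pd * Bᵀ) = (D * (Pd * Bᵀ))ᵀᵀ := (Matrix.transpose_transpose _).symm
      _ = Bᵀ := by rw [h, Matrix.transpose_transpose]
  -- products with Z
  have hDZ : D * Z = -(D * (Pd * C)) + D * W := by
    rw [hZ, Matrix.mul_add, Matrix.mul_add, ← Matrix.mul_assoc D (1 - Pd * D) T, k0, Matrix.zero_mul,
      add_zero, Matrix.mul_neg]
  have hBZ : B * Z = -(B * (Pd * C)) + B * W := by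
    rw [hZ, Matrix.mul_add, Matrix.mul_add, ← Matrix.mul_assoc B (1 - Pd * D) T, kB, Matrix.zero_mul,
      add_zero, Matrix.mul_neg]
  have hZt : Zᵀ = -(B * Pd) + Wᵀ + Tᵀ * (1 - Pd * D) := by
    rw [hZ]
    simp only [Matrix.transpose_add, Matrix.transpose_neg, Matrix.transpose_mul, hsymPDt,
      hPs, hCB, Matrix.transpose_transpose]
  have hZtC : Zᵀ * C = -(B * (Pd * C)) + Wᵀ * C := by
    rw [hZt, Matrix.add_mul, Matrix.add_mul, Matrix.mul_assoc Tᵀ _ C, kC, Matrix.mul_zero, add_zero,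
      Matrix.neg_mul, Matrix.mul_assoc]
  have hZtD : Zᵀ * D = -(B * (Pd * D)) + Wᵀ * D := by
    rw [hZt, Matrix.add_mul, Matrix.add_mul, Matrix.mul_assoc Tᵀ _ D, kD, Matrix.mul_zero, add_zero,
      Matrix.neg_mul, Matrix.mul_assoc]
  have kPdDPd : ∀ X : Matrix (Fin r) (Fin q) ℝ, Pd * (D * (Pd * X)) = Pd * X := by
    intro X
    calc Pd * (D * (Pd * X)) = ((Pd * D) * Pd) * X := by simp only [Matrix.mul_assoc]
      _ = Pd * X := by rw [hPd2]
  have hPdDZ : Pd * (D * Z) = -(Pd * C) + Pd * (D * W) := by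
    rw [hDZ, Matrix.mul_add, Matrix.mul_neg, kPdDPd]
  have h1 : (B * (Pd * D)) * Z = -(B * (Pd * C)) + B * W := by
    have e1 : (B * (Pd * D)) * Z = B * (Pd * (D * Z)) := by simp only [Matrix.mul_assoc]
    have e2 : B * (Pd * (D * W)) = (B * (Pd * D)) * W := by simp only [Matrix.mul_assoc]
    rw [e1, hPdDZ, Matrix.mul_add, Matrix.mul_neg, e2, kBPD]
  have h2 : (Wᵀ * D) * Z = -(Wᵀ * C) + Wᵀ * (D * W) := by
    rw [Matrix.mul_assoc, hDZ, Matrix.mul_add, Matrix.mul_neg, kDPC]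
  -- the key algebraic identity
  have key1 : (A + Zᵀ * C) + (B + Zᵀ * D) * Z
      = (A - B * (Pd * C)) + Wᵀ * (D * W) := by
    rw [hZtC, Matrix.add_mul, hBZ, hZtD, Matrix.add_mul, Matrix.neg_mul, h1, h2]
    abel
  have hR2sq' : R2 * R2 = A - B * (Pd * C) := by rw [hR2sq, Matrix.mul_assoc]
  have key2 : (A - B * (Pd * C)) + Wᵀ * (D * W)
      = R2 * ((1 - Sᵀ * S) + Sᵀ * (1 - R1 * (-D) * R1) * S) * R2 := by
    rw [← hR2sq', hWdef]
    simp only [Matrix.transpose_mul, hR1t, hR2t]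
    simp only [Matrix.mul_add, Matrix.add_mul, Matrix.mul_sub, Matrix.sub_mul, Matrix.mul_neg,
      Matrix.neg_mul, Matrix.mul_one, Matrix.one_mul, mul_add, add_mul, mul_sub, sub_mul,
      mul_neg, neg_mul, mul_one, one_mul, Matrix.mul_assoc, neg_neg]
    abel
  -- psd of the middle factor
  set K := R1 * (-D) * R1 with hKdef
  have hR1sq' : ∀ X : Matrix (Fin r) (Fin r) ℝ, R1 * (R1 * X) = Nd * X := fun X => by
    rw [← Matrix.mul_assoc, hR1sq]
  have hNd1' : ∀ X : Matrix (Fin r) (Fin r) ℝ,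
      (-D) * (Nd * ((-D) * X)) = (-D) * X := fun X => by
    calc (-D) * (Nd * ((-D) * X)) = (((-D) * Nd) * (-D)) * X := by
          simp only [Matrix.mul_assoc]
      _ = (-D) * X := by rw [hNd1]
  have hKidem : K * K = K := by
    rw [hKdef]
    simp only [Matrix.mul_assoc, hR1sq', hNd1']
  have hKsym : Kᵀ = K := by
    rw [hKdef]
    simp only [Matrix.transpose_mul, Matrix.transpose_neg, hDs, hR1t, Matrix.mul_assoc]
  have h1K : ((1 : Matrix (Fin r) (Fin r) ℝ) - K).PosSemidef := by
    have heq : (1 : Matrix (Fin r) (Fin r) ℝ) - K = (1 - K)ᴴ * (1 - K) := by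
      rw [Matrix.conjTranspose_eq_transpose_of_trivial, Matrix.transpose_sub,
        Matrix.transpose_one, hKsym]
      have hx : ((1 : Matrix (Fin r) (Fin r) ℝ) - K) * (1 - K) = 1 - K - K + K * K := by
        noncomm_ring
      rw [hx, hKidem]; abel
    rw [heq]
    exact Matrix.posSemidef_conjTranspose_mul_self _
  have hSKS : (Sᵀ * (1 - K) * S).PosSemidef := by
    have h := h1K.conjTranspose_mul_mul_same S
    rwa [Matrix.conjTranspose_eq_transpose_of_trivial] at h
  have hM : ((1 - Sᵀ * S) + Sᵀ * (1 - K) * S).PosSemidef := hS.add hSKS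
  have hfinal : (R2 * ((1 - Sᵀ * S) + Sᵀ * (1 - K) * S) * R2).PosSemidef := by
    have h := hM.conjTranspose_mul_mul_same R2
    rwa [Matrix.conjTranspose_eq_transpose_of_trivial, hR2t] at h
  -- reduce the block goal
  have hPm : Pm = Matrix.fromBlocks A B C D := by
    rw [hA, hB, hC, hD]
    exact (Matrix.fromBlocks_toBlocks Pm).symm
  rw [hPm, Matrix.transpose_fromRows, Matrix.transpose_one,
    Matrix.fromCols_mul_fromBlocks, Matrix.fromCols_mul_fromRows]
  simp only [Matrix.one_mul, Matrix.mul_one]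
  rw [key1, key2]
  exact hfinal
end

section
/- Let Φ be a symmetric (n+T)×(n+T) matrix with Φ₂₂ < 0, and let X₋ ∈ ℝ^{n×T}, U₋ ∈ ℝ^{m×T}, X₊ ∈ ℝ^{n×T}. Define N = [I X₊; 0 −X₋; 0 −U₋] Φ [I X₊; 0 −X₋; 0 −U₋]ᵀ. Then a pair (A,B) satisfies (X₊ − AX₋ − BU₋)ᵀ ∈ Z_T(Φ) if and only if [A B]ᵀ ∈ Z_{n+m}(N), i.e., [I, A, B] N [I, A, B]ᵀ ≥ 0. -/
open Matrix

theorem stmt14 {n m T : ℕ} (Φ : Matrix (Fin n ⊕ Fin T) (Fin n ⊕ Fin T) ℝ)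
    (hsym : Φ.IsSymm) (hΦ22 : (-(Φ.toBlocks₂₂)).PosDef)
    (Xm Xp : Matrix (Fin n) (Fin T) ℝ) (Um : Matrix (Fin m) (Fin T) ℝ)
    (F : Matrix ((Fin n ⊕ Fin n) ⊕ Fin m) (Fin n ⊕ Fin T) ℝ)
    (hF : F = Matrix.fromRows
      (Matrix.fromRows (Matrix.fromCols (1 : Matrix (Fin n) (Fin n) ℝ) Xp)
        (Matrix.fromCols (0 : Matrix (Fin n) (Fin n) ℝ) (-Xm)))
      (Matrix.fromCols (0 : Matrix (Fin m) (Fin n) ℝ) (-Um)))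
    (N : Matrix ((Fin n ⊕ Fin n) ⊕ Fin m) ((Fin n ⊕ Fin n) ⊕ Fin m) ℝ)
    (hN : N = F * Φ * Fᵀ)
    (A : Matrix (Fin n) (Fin n) ℝ) (B : Matrix (Fin n) (Fin m) ℝ) :
    ((Matrix.fromRows (1 : Matrix (Fin n) (Fin n) ℝ) (Xp - A * Xm - B * Um)ᵀ)ᵀ * Φ *
        Matrix.fromRows (1 : Matrix (Fin n) (Fin n) ℝ) (Xp - A * Xm - B * Um)ᵀ).PosSemidef ↔
      (Matrix.fromCols (Matrix.fromCols (1 : Matrix (Fin n) (Fin n) ℝ) A) B * N *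
        (Matrix.fromCols (Matrix.fromCols (1 : Matrix (Fin n) (Fin n) ℝ) A) B)ᵀ).PosSemidef := by
  subst hF hN
  have key : Matrix.fromCols (Matrix.fromCols (1 : Matrix (Fin n) (Fin n) ℝ) A) B *
      Matrix.fromRows
        (Matrix.fromRows (Matrix.fromCols (1 : Matrix (Fin n) (Fin n) ℝ) Xp)
          (Matrix.fromCols (0 : Matrix (Fin n) (Fin n) ℝ) (-Xm)))
        (Matrix.fromCols (0 : Matrix (Fin m) (Fin n) ℝ) (-Um)) =
      Matrix.fromCols (1 : Matrix (Fin n) (Fin n) ℝ) (Xp - A * Xm - B * Um) := by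
    rw [fromCols_mul_fromRows, fromCols_mul_fromRows, mul_fromCols, mul_fromCols,
      mul_fromCols]
    ext i j
    cases j <;> simp [sub_eq_add_neg]
  have hG : (Matrix.fromRows (1 : Matrix (Fin n) (Fin n) ℝ) (Xp - A * Xm - B * Um)ᵀ)ᵀ =
      Matrix.fromCols (1 : Matrix (Fin n) (Fin n) ℝ) (Xp - A * Xm - B * Um) := by
    rw [transpose_fromRows, transpose_one, transpose_transpose]
  have heq : (Matrix.fromRows (1 : Matrix (Fin n) (Fin n) ℝ) (Xp - A * Xm - B * Um)ᵀ)ᵀ * Φ *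
      Matrix.fromRows (1 : Matrix (Fin n) (Fin n) ℝ) (Xp - A * Xm - B * Um)ᵀ =
      Matrix.fromCols (Matrix.fromCols (1 : Matrix (Fin n) (Fin n) ℝ) A) B *
        (Matrix.fromRows
          (Matrix.fromRows (Matrix.fromCols (1 : Matrix (Fin n) (Fin n) ℝ) Xp)
            (Matrix.fromCols (0 : Matrix (Fin n) (Fin n) ℝ) (-Xm)))
          (Matrix.fromCols (0 : Matrix (Fin m) (Fin n) ℝ) (-Um)) * Φ *
          (Matrix.fromRows
            (Matrix.fromRows (Matrix.fromCols (1 : Matrix (Fin n) (Fin n) ℝ) Xp)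
              (Matrix.fromCols (0 : Matrix (Fin n) (Fin n) ℝ) (-Xm)))
            (Matrix.fromCols (0 : Matrix (Fin m) (Fin n) ℝ) (-Um)))ᵀ) *
        (Matrix.fromCols (Matrix.fromCols (1 : Matrix (Fin n) (Fin n) ℝ) A) B)ᵀ := by
    rw [show ∀ (P : Matrix ((Fin n ⊕ Fin n) ⊕ Fin m) (Fin n ⊕ Fin T) ℝ)
        (Q : Matrix (Fin n) ((Fin n ⊕ Fin n) ⊕ Fin m) ℝ),
        Q * (P * Φ * Pᵀ) * Qᵀ = (Q * P) * Φ * (Q * P)ᵀ from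
      fun P Q => by rw [transpose_mul]; simp [Matrix.mul_assoc], key, hG]
    rw [← hG, transpose_transpose]
  rw [heq]
end

section
/- With N defined from data as N = [I X₊; 0 −X₋; 0 −U₋] Φ [I X₊; 0 −X₋; 0 −U₋]ᵀ where Φ₂₂ < 0, the set Σ_D = {(A,B) : [I, A, B] N [I, A, B]ᵀ ≥ 0} is bounded if the (n+m)×T matrix [X₋; U₋] has full row rank n+m (equivalently [X₋ᵀ U₋ᵀ] has full column rank). -/
open Matrix

lemma psd_cs {k : Type*} [Fintype k] (M : Matrix k k ℝ) (hM : M.PosSemidef)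
    (x y : k → ℝ) : (x ⬝ᵥ M *ᵥ y)^2 ≤ (x ⬝ᵥ M *ᵥ x) * (y ⬝ᵥ M *ᵥ y) := by
  have hsymm : Mᵀ = M := hM.isHermitian
  have hxy : y ⬝ᵥ M *ᵥ x = x ⬝ᵥ M *ᵥ y := by
    rw [dotProduct_mulVec, ← mulVec_transpose, hsymm, dotProduct_comm]
  have key : ∀ t : ℝ, 0 ≤ (y ⬝ᵥ M *ᵥ y) * (t*t) + (2*(x ⬝ᵥ M *ᵥ y))*t + x ⬝ᵥ M *ᵥ x := by
    intro t
    have h0 := hM.dotProduct_mulVec_nonneg (x + t • y)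
    rw [star_trivial] at h0
    have hx : (x + t • y) ⬝ᵥ M *ᵥ (x + t • y)
        = (y ⬝ᵥ M *ᵥ y) * (t*t) + (2*(x ⬝ᵥ M *ᵥ y))*t + x ⬝ᵥ M *ᵥ x := by
      simp only [mulVec_add, mulVec_smul, dotProduct_add, add_dotProduct, smul_dotProduct,
        dotProduct_smul, smul_eq_mul, hxy]
      ring
    linarith [hx ▸ h0]
  have hd := discrim_le_zero key
  rw [discrim] at hd
  nlinarith [hd]

theorem stmt15 {n m T : ℕ} (Φ : Matrix (Fin n ⊕ Fin T) (Fin n ⊕ Fin T) ℝ)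
    (hsym : Φ.IsSymm) (hΦ22 : (-(Φ.toBlocks₂₂)).PosDef)
    (Xm Xp : Matrix (Fin n) (Fin T) ℝ) (Um : Matrix (Fin m) (Fin T) ℝ)
    (N : Matrix ((Fin n ⊕ Fin n) ⊕ Fin m) ((Fin n ⊕ Fin n) ⊕ Fin m) ℝ)
    (hN : N = (Matrix.fromRows
      (Matrix.fromRows (Matrix.fromCols (1 : Matrix (Fin n) (Fin n) ℝ) Xp)
        (Matrix.fromCols (0 : Matrix (Fin n) (Fin n) ℝ) (-Xm)))
      (Matrix.fromCols (0 : Matrix (Fin m) (Fin n) ℝ) (-Um))) * Φ *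
      (Matrix.fromRows
      (Matrix.fromRows (Matrix.fromCols (1 : Matrix (Fin n) (Fin n) ℝ) Xp)
        (Matrix.fromCols (0 : Matrix (Fin n) (Fin n) ℝ) (-Xm)))
      (Matrix.fromCols (0 : Matrix (Fin m) (Fin n) ℝ) (-Um)))ᵀ)
    (hrank : (Matrix.fromRows Xm Um).rank = n + m) :
    ∃ C : ℝ, ∀ (A : Matrix (Fin n) (Fin n) ℝ) (B : Matrix (Fin n) (Fin m) ℝ),
      (Matrix.fromCols (Matrix.fromCols (1 : Matrix (Fin n) (Fin n) ℝ) A) B * N *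
        (Matrix.fromCols (Matrix.fromCols (1 : Matrix (Fin n) (Fin n) ℝ) A) B)ᵀ).PosSemidef →
      (∀ i j, |A i j| ≤ C) ∧ (∀ i j, |B i j| ≤ C) := by
  classical
  set M : Matrix (Fin T) (Fin T) ℝ := -(Φ.toBlocks₂₂) with hMdef
  have hMps : M.PosSemidef := hΦ22.posSemidef
  have hMsymm : Mᵀ = M := hMps.isHermitian
  have hMdet : IsUnit M.det := isUnit_iff_ne_zero.mpr hΦ22.det_pos.ne'
  have hMMinv : M * M⁻¹ = 1 := mul_nonsing_inv M hMdet
  have hMinvPS : M⁻¹.PosSemidef := hMps.inv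
  -- Cauchy-Schwarz with M⁻¹ weight
  have hMx : ∀ w : Fin T → ℝ, M *ᵥ (M⁻¹ *ᵥ w) = w := by
    intro w; rw [mulVec_mulVec, hMMinv, one_mulVec]
  have hcs : ∀ (w v : Fin T → ℝ),
      (w ⬝ᵥ v)^2 ≤ (w ⬝ᵥ M⁻¹ *ᵥ w) * (v ⬝ᵥ M *ᵥ v) := by
    intro w v
    have h1 : (M⁻¹ *ᵥ w) ⬝ᵥ M *ᵥ v = w ⬝ᵥ v := by
      rw [dotProduct_mulVec, ← mulVec_transpose, hMsymm, hMx]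
    have h2 : (M⁻¹ *ᵥ w) ⬝ᵥ M *ᵥ (M⁻¹ *ᵥ w) = w ⬝ᵥ M⁻¹ *ᵥ w := by
      rw [hMx, dotProduct_comm]
    have := psd_cs M hMps (M⁻¹ *ᵥ w) v
    rw [h1, h2] at this
    exact this
  -- constants
  set a : Fin n → ℝ := fun i => Φ.toBlocks₁₁ i i with ha_def
  set b : Fin n → (Fin T → ℝ) := fun i => Φ.toBlocks₂₁ *ᵥ Pi.single i 1 with hb_def
  set β : Fin n → ℝ := fun i => b i ⬝ᵥ M⁻¹ *ᵥ b i with hβ_def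
  have hβ0 : ∀ i, 0 ≤ β i := by
    intro i
    have := hMinvPS.dotProduct_mulVec_nonneg (b i)
    rwa [star_trivial] at this
  set K0 : ℝ := ∑ i : Fin n, |2 * a i + 4 * β i| with hK0_def
  have hK0 : ∀ i, 2 * a i + 4 * β i ≤ K0 := fun i =>
    le_trans (le_abs_self _)
      (Finset.single_le_sum (f := fun i => |2 * a i + 4 * β i|)
        (fun _ _ => abs_nonneg _) (Finset.mem_univ i))
  have hK0nn : 0 ≤ K0 := Finset.sum_nonneg fun _ _ => abs_nonneg _
  set γ : ℝ := ∑ j : Fin T, |M⁻¹ j j| with hγ_def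
  have hγ : ∀ j, M⁻¹ j j ≤ γ := fun j =>
    le_trans (le_abs_self _)
      (Finset.single_le_sum (f := fun j => |M⁻¹ j j|)
        (fun _ _ => abs_nonneg _) (Finset.mem_univ j))
  have hγnn : 0 ≤ γ := Finset.sum_nonneg fun _ _ => abs_nonneg _
  have hMinvdiag : ∀ j, 0 ≤ M⁻¹ j j := by
    intro j
    have := hMinvPS.dotProduct_mulVec_nonneg (Pi.single j 1)
    rw [star_trivial] at this
    simpa [dotProduct, mulVec, Pi.single_apply] using this
  set D : ℝ := Real.sqrt (K0 * γ) with hD_def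
  have hDnn : 0 ≤ D := Real.sqrt_nonneg _
  -- the data matrix and its right inverse
  set W : Matrix (Fin n ⊕ Fin m) (Fin T) ℝ := Matrix.fromRows Xm Um with hW_def
  have hKu : IsUnit (W * Wᵀ) := by
    have h1 : (W * Wᵀ).rank = n + m := by rw [W.rank_self_mul_transpose, hrank]
    rw [← mulVec_surjective_iff_isUnit]
    have h2 : LinearMap.range (W * Wᵀ).mulVecLin = ⊤ := by
      apply Submodule.eq_top_of_finrank_eq
      rw [← Matrix.rank, h1]
      simp [Module.finrank_pi]
    exact LinearMap.range_eq_top.mp h2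
  set Q : Matrix (Fin T) (Fin n ⊕ Fin m) ℝ := Wᵀ * (W * Wᵀ)⁻¹ with hQ_def
  have hWQ : W * Q = 1 := by
    rw [hQ_def, ← Matrix.mul_assoc]
    exact mul_nonsing_inv _ ((Matrix.isUnit_iff_isUnit_det _).mp hKu)
  set E : ℝ := ∑ i : Fin n, ∑ j : Fin T, |Xp i j| with hE_def
  have hE : ∀ i j, |Xp i j| ≤ E := by
    intro i j
    calc |Xp i j| ≤ ∑ j' : Fin T, |Xp i j'| :=
          Finset.single_le_sum (f := fun j' => |Xp i j'|)
            (fun _ _ => abs_nonneg _) (Finset.mem_univ j)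
      _ ≤ E := Finset.single_le_sum (f := fun i => ∑ j : Fin T, |Xp i j|)
          (fun _ _ => Finset.sum_nonneg fun _ _ => abs_nonneg _) (Finset.mem_univ i)
  have hEnn : 0 ≤ E := Finset.sum_nonneg fun _ _ => Finset.sum_nonneg fun _ _ => abs_nonneg _
  set S : ℝ := ∑ k : Fin n ⊕ Fin m, ∑ j : Fin T, |Q j k| with hS_def
  have hS : ∀ k, (∑ j : Fin T, |Q j k|) ≤ S := fun k =>
    Finset.single_le_sum (f := fun k => ∑ j : Fin T, |Q j k|)
      (fun _ _ => Finset.sum_nonneg fun _ _ => abs_nonneg _) (Finset.mem_univ k)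
  refine ⟨(E + D) * S, ?_⟩
  intro A B hPSD
  set V : Matrix (Fin n) (Fin T) ℝ := Xp - (A * Xm + B * Um) with hV_def
  -- reduce the PSD hypothesis
  have hGM : (Matrix.fromCols (Matrix.fromCols (1 : Matrix (Fin n) (Fin n) ℝ) A) B) *
      (Matrix.fromRows
      (Matrix.fromRows (Matrix.fromCols (1 : Matrix (Fin n) (Fin n) ℝ) Xp)
        (Matrix.fromCols (0 : Matrix (Fin n) (Fin n) ℝ) (-Xm)))
      (Matrix.fromCols (0 : Matrix (Fin m) (Fin n) ℝ) (-Um)))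
      = Matrix.fromCols (1 : Matrix (Fin n) (Fin n) ℝ) V := by
    rw [fromCols_mul_fromRows, fromCols_mul_fromRows, mul_fromCols, mul_fromCols]
    ext i (j | j) <;>
      simp [hV_def, fromCols_apply_inl, fromCols_apply_inr, mul_neg, sub_eq_add_neg] <;>
      ring
  have hP : ((fromCols (1 : Matrix (Fin n) (Fin n) ℝ) V) * Φ *
      (fromCols (1 : Matrix (Fin n) (Fin n) ℝ) V)ᵀ).PosSemidef := by
    rw [← hGM]
    have heq : ∀ (G : Matrix (Fin n) ((Fin n ⊕ Fin n) ⊕ Fin m) ℝ)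
        (MM : Matrix ((Fin n ⊕ Fin n) ⊕ Fin m) (Fin n ⊕ Fin T) ℝ),
        (G * MM) * Φ * (G * MM)ᵀ = G * (MM * Φ * MMᵀ) * Gᵀ := by
      intro G MM
      simp only [Matrix.transpose_mul, Matrix.mul_assoc]
    rw [heq, ← hN]
    exact hPSD
  -- per-row quadratic inequality
  have hq : ∀ i : Fin n, (V i) ⬝ᵥ M *ᵥ (V i) ≤ a i + 2 * (b i ⬝ᵥ V i) := by
    intro i
    have h0 := hP.dotProduct_mulVec_nonneg (Pi.single i 1)
    rw [star_trivial] at h0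
    set e : Fin n → ℝ := Pi.single i 1 with he_def
    have he : (fromCols (1:Matrix (Fin n) (Fin n) ℝ) V)ᵀ *ᵥ e = Sum.elim e (V i) := by
      rw [transpose_fromCols, fromRows_mulVec, transpose_one, one_mulVec]
      congr 1
      ext j
      simp [he_def, mulVec, dotProduct, Pi.single_apply]
    rw [Matrix.mul_assoc, ← mulVec_mulVec, ← mulVec_mulVec, dotProduct_mulVec e,
      ← mulVec_transpose, he, ← fromBlocks_toBlocks Φ, fromBlocks_mulVec,
      sumElim_dotProduct_sumElim, dotProduct_add, dotProduct_add] at h0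
    simp only [Sum.elim_comp_inl, Sum.elim_comp_inr] at h0
    have h11 : e ⬝ᵥ Φ.toBlocks₁₁ *ᵥ e = Φ.toBlocks₁₁ i i := by
      simp [he_def, mulVec, dotProduct, Pi.single_apply]
    have h21T : (Φ.toBlocks₁₂)ᵀ = Φ.toBlocks₂₁ := by
      ext x y
      simpa [toBlocks₁₂, toBlocks₂₁] using hsym.apply (Sum.inr x) (Sum.inl y)
    have h12 : e ⬝ᵥ Φ.toBlocks₁₂ *ᵥ V i = (Φ.toBlocks₂₁ *ᵥ e) ⬝ᵥ V i := by
      rw [dotProduct_mulVec, ← mulVec_transpose, h21T]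
    have h21 : (V i) ⬝ᵥ Φ.toBlocks₂₁ *ᵥ e = (Φ.toBlocks₂₁ *ᵥ e) ⬝ᵥ V i := dotProduct_comm _ _
    have h22 : (V i) ⬝ᵥ Φ.toBlocks₂₂ *ᵥ V i = -((V i) ⬝ᵥ M *ᵥ V i) := by
      rw [hMdef, neg_mulVec, dotProduct_neg, neg_neg]
    rw [h11, h12, h21, h22] at h0
    simp only [ha_def, hb_def]
    linarith
  -- bound the quadratic form
  have hqK : ∀ i : Fin n, (V i) ⬝ᵥ M *ᵥ (V i) ≤ K0 := by
    intro i
    have h1 := hq i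
    have h2 : (b i ⬝ᵥ V i)^2 ≤ β i * ((V i) ⬝ᵥ M *ᵥ (V i)) := by
      exact hcs (b i) (V i)
    have h3 : 0 ≤ (V i) ⬝ᵥ M *ᵥ (V i) := by
      have := hMps.dotProduct_mulVec_nonneg (V i); rwa [star_trivial] at this
    have h4 : (V i) ⬝ᵥ M *ᵥ (V i) ≤ 2 * a i + 4 * β i := by
      nlinarith [hβ0 i, sq_nonneg ((V i ⬝ᵥ M *ᵥ V i) / 4 - β i), sq_nonneg (b i ⬝ᵥ V i)]
    exact h4.trans (hK0 i)
  -- entrywise bound on V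
  have hVb : ∀ i j, |V i j| ≤ D := by
    intro i j
    have h1 := hcs (Pi.single j 1) (V i)
    have h2 : (Pi.single j 1 : Fin T → ℝ) ⬝ᵥ V i = V i j := by
      simp [dotProduct, Pi.single_apply]
    have h3 : (Pi.single j 1 : Fin T → ℝ) ⬝ᵥ M⁻¹ *ᵥ Pi.single j 1 = M⁻¹ j j := by
      simp [dotProduct, mulVec, Pi.single_apply]
    rw [h2, h3] at h1
    have h4 : 0 ≤ (V i) ⬝ᵥ M *ᵥ (V i) := by
      have := hMps.dotProduct_mulVec_nonneg (V i); rwa [star_trivial] at this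
    have h5 : (V i j)^2 ≤ K0 * γ := by
      calc (V i j)^2 ≤ M⁻¹ j j * ((V i) ⬝ᵥ M *ᵥ (V i)) := h1
        _ ≤ γ * K0 := mul_le_mul (hγ j) (hqK i) h4 hγnn
        _ = K0 * γ := mul_comm _ _
    calc |V i j| = Real.sqrt ((V i j)^2) := (Real.sqrt_sq_eq_abs _).symm
      _ ≤ D := Real.sqrt_le_sqrt h5
  -- recover A and B
  have hZW : Matrix.fromCols A B * W = Xp - V := by
    rw [hW_def, fromCols_mul_fromRows, hV_def, sub_sub_cancel]
  have hZ : Matrix.fromCols A B = (Xp - V) * Q := by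
    rw [← hZW, Matrix.mul_assoc, hWQ, Matrix.mul_one]
  have hent : ∀ (i : Fin n) (k : Fin n ⊕ Fin m),
      |((Xp - V) * Q) i k| ≤ (E + D) * S := by
    intro i k
    rw [Matrix.mul_apply]
    calc |∑ j : Fin T, (Xp - V) i j * Q j k| ≤ ∑ j : Fin T, |(Xp - V) i j * Q j k| :=
          Finset.abs_sum_le_sum_abs _ _
      _ ≤ ∑ j : Fin T, (E + D) * |Q j k| := by
          apply Finset.sum_le_sum
          intro j _
          rw [abs_mul]
          apply mul_le_mul_of_nonneg_right _ (abs_nonneg _)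
          calc |(Xp - V) i j| = |Xp i j - V i j| := by rw [Matrix.sub_apply]
            _ ≤ |Xp i j| + |V i j| := abs_sub _ _
            _ ≤ E + D := add_le_add (hE i j) (hVb i j)
      _ = (E + D) * ∑ j : Fin T, |Q j k| := by rw [Finset.mul_sum]
      _ ≤ (E + D) * S := mul_le_mul_of_nonneg_left (hS k) (add_nonneg hEnn hDnn)
  constructor
  · intro i j
    have := hent i (Sum.inl j)
    rwa [← hZ, fromCols_apply_inl] at this
  · intro i j
    have := hent i (Sum.inr j)
    rwa [← hZ, fromCols_apply_inr] at this
end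

section
/- Let P, Q be symmetric positive definite n×n matrices, A_c ∈ ℝ^{n×n}, B ∈ ℝ^{n×m}, β > 0, and suppose the block matrix [[Q − A_c Q A_cᵀ − BBᵀ, −A_c Q],[−Q A_cᵀ, βI − Q]] is positive semidefinite. Then for every Δ ∈ ℝ^{m×n}, Q − (A_c + BΔ) Q (A_c + BΔ)ᵀ ≥ B(I − β Δ Δᵀ)Bᵀ. -/
open Matrix

theorem stmt17 {n m : ℕ} (P Q Ac : Matrix (Fin n) (Fin n) ℝ) (B : Matrix (Fin n) (Fin m) ℝ)
    (β : ℝ) (hβ : 0 < β) (hP : P.PosDef) (hQ : Q.PosDef)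
    (hblk : (Matrix.fromBlocks (Q - Ac * Q * Acᵀ - B * Bᵀ) (-(Ac * Q))
      (-(Q * Acᵀ)) (β • (1 : Matrix (Fin n) (Fin n) ℝ) - Q)).PosSemidef) :
    ∀ Δ : Matrix (Fin m) (Fin n) ℝ,
      (Q - (Ac + B * Δ) * Q * (Ac + B * Δ)ᵀ -
        B * ((1 : Matrix (Fin m) (Fin m) ℝ) - β • (Δ * Δᵀ)) * Bᵀ).PosSemidef := by
  intro Δ
  have h := hblk.mul_mul_conjTranspose_same
    (Matrix.fromCols (1 : Matrix (Fin n) (Fin n) ℝ) (B * Δ))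
  rw [conjTranspose_fromCols_eq_fromRows_conjTranspose,
    fromCols_mul_fromBlocks, fromCols_mul_fromRows] at h
  convert h using 1
  simp only [conjTranspose_eq_transpose_of_trivial, transpose_add, transpose_mul, transpose_one,
    Matrix.mul_one, Matrix.one_mul, Matrix.mul_add, Matrix.add_mul, Matrix.mul_sub,
    Matrix.sub_mul, Matrix.mul_smul, Matrix.smul_mul, Matrix.mul_assoc,
    Matrix.mul_neg, Matrix.neg_mul, neg_smul, one_smul, smul_neg]
  noncomm_ring
end
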